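/- (Proposition: point of convergence of inwinding rectangular spirals) Assume |α| < 1, |β| < 1 and d < 1. Then the corner points P n = (X n, Y n) converge as n → ∞ to the point P* = (X*, Y*) with X* = ( G 0 + b²·G₋₂ − c·(d² + a·d − b)/(d² + 1) ) / (a² + (b+1)²) and Y* = ( G 1 + b²·G₋₁ − c·d·(d² + a·d − b)/(d² + 1) ) / (a² + (b+1)²). -/

import Mathlib

set_option maxHeartbeats 4000000 in


theorem stmt_11 (a b c d : ℝ) (ha : 0 < a) (hb : 0 < b) (hc : 0 ≤ c) (hd : 0 ≤ d)
    (hden : d^2 - a*d - b ≠ 0)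
    (α β : ℝ)
    (hα : α = (a + Real.sqrt (a^2 + 4*b)) / 2)
    (hβ : β = (a - Real.sqrt (a^2 + 4*b)) / 2)
    (hαlt : |α| < 1) (hβlt : |β| < 1) (hdlt : d < 1)
    (G : ℕ → ℝ)
    (hG : ∀ n : ℕ, 2 ≤ n → G n = a * G (n-1) + b * G (n-2) + c * d^n)
    (Gm1 Gm2 : ℝ)
    (hGm1 : Gm1 = (G 1 - a * G 0 - c*d) / b)
    (hGm2 : Gm2 = ((a^2 + b) * G 0 - a * G 1 + c * (a*d - b)) / b^2)
    (Γ : ℕ → ℝ)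
    (hΓeven : ∀ n : ℕ, Even n →
      Γ n = ∑ k ∈ Finset.range (n/2 + 1), (-1:ℝ)^k * G (2*k))
    (hΓodd : ∀ n : ℕ, Odd n →
      Γ n = ∑ k ∈ Finset.range ((n-1)/2 + 1), (-1:ℝ)^k * G (2*k+1))
    (X Y : ℕ → ℝ)
    (hXeven : ∀ n : ℕ, 2 ≤ n → Even n → X n = Γ n)
    (hYeven : ∀ n : ℕ, 2 ≤ n → Even n → Y n = Γ (n-1))
    (hXodd : ∀ n : ℕ, 1 ≤ n → Odd n → X n = Γ (n-1))
    (hYodd : ∀ n : ℕ, 1 ≤ n → Odd n → Y n = Γ n) :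
    Filter.Tendsto X Filter.atTop
      (nhds ((G 0 + b^2 * Gm2 - c * (d^2 + a*d - b) / (d^2 + 1)) / (a^2 + (b+1)^2)))
    ∧ Filter.Tendsto Y Filter.atTop
      (nhds ((G 1 + b^2 * Gm1 - c * d * (d^2 + a*d - b) / (d^2 + 1)) / (a^2 + (b+1)^2))) := by
  have hb0 : b ≠ 0 := ne_of_gt hb
  have hs0 : 0 ≤ Real.sqrt (a^2+4*b) := Real.sqrt_nonneg _
  have hsq : Real.sqrt (a^2+4*b) ^ 2 = a^2 + 4*b := Real.sq_sqrt (by positivity)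
  have hab' : α + β = a := by rw [hα, hβ]; ring
  have hmul : α * β = -b := by rw [hα, hβ]; nlinarith [hsq]
  have hα1 : α < 1 := (abs_lt.1 hαlt).2
  have hαpos : 0 < α := by rw [hα]; nlinarith
  have hβneg : β < 0 := by rw [hβ]; nlinarith
  -- choose a geometric ratio r
  set r : ℝ := max ((α+1)/2) ((d+1)/2) with hrdef
  have hrα : α < r := lt_of_lt_of_le (by linarith) (le_max_left _ _)
  have hrd : d < r := lt_of_lt_of_le (by linarith) (le_max_right _ _)
  have hr0 : 0 < r := lt_trans hαpos hrα
  have hr1 : r < 1 := max_lt (by linarith) (by linarith)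
  have hquad : 0 < r^2 - a*r - b := by
    nlinarith [mul_pos (sub_pos.2 hrα) (sub_pos.2 (lt_trans hβneg hr0))]
  have hr2lt : r^2 < 1 := by nlinarith
  -- geometric bound on G
  set C : ℝ := |G 0| + |G 1|/r + c/(r^2 - a*r - b) with hCdef
  have hnn1 : 0 ≤ |G 1|/r := div_nonneg (abs_nonneg _) hr0.le
  have hnn2 : 0 ≤ c/(r^2 - a*r - b) := div_nonneg hc hquad.le
  have hC0 : |G 0| ≤ C := by rw [hCdef]; linarith
  have hC1 : |G 1| ≤ C * r := by
    have h1 : |G 1| / r ≤ C := by rw [hCdef]; linarith [abs_nonneg (G 0)]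
    calc |G 1| = |G 1|/r * r := (div_mul_cancel₀ _ (ne_of_gt hr0)).symm
      _ ≤ C * r := by nlinarith
  have hcC : c ≤ C * (r^2 - a*r - b) := by
    have h1 : c / (r^2 - a*r - b) ≤ C := by
      rw [hCdef]; linarith [abs_nonneg (G 0)]
    calc c = c / (r^2 - a*r - b) * (r^2 - a*r - b) := (div_mul_cancel₀ _ (ne_of_gt hquad)).symm
      _ ≤ C * (r^2 - a*r - b) := by nlinarith
  have hbound : ∀ n, |G n| ≤ C * r ^ n := by
    intro n
    induction n using Nat.strong_induction_on with
    | _ n ih =>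
      rcases n with _ | _ | m
      · simpa using hC0
      · simpa using hC1
      · have hm1 := ih (m+1) (by omega)
        have hm0 := ih m (by omega)
        have hGr : G (m+2) = a * G (m+1) + b * G m + c * d^(m+2) := by
          have h := hG (m+2) (by omega)
          rw [show m+2-1 = m+1 by omega, show m+2-2 = m by omega] at h
          exact h
        have habs : |G (m+2)| ≤ a * |G (m+1)| + b * |G m| + c * d^(m+2) := by
          rw [hGr]
          calc |a * G (m+1) + b * G m + c * d^(m+2)|
              ≤ |a * G (m+1) + b * G m| + |c * d^(m+2)| := abs_add_le _ _
            _ ≤ |a * G (m+1)| + |b * G m| + |c * d^(m+2)| := by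
                linarith [abs_add_le (a * G (m+1)) (b * G m)]
            _ = a * |G (m+1)| + b * |G m| + c * d^(m+2) := by
                rw [abs_mul, abs_mul, abs_mul, abs_of_pos ha, abs_of_pos hb,
                  abs_of_nonneg hc, abs_of_nonneg (pow_nonneg hd _)]
        have hdn : d^(m+2) ≤ r^m := by
          calc d^(m+2) ≤ r^(m+2) := pow_le_pow_left₀ hd hrd.le _
            _ ≤ r^m := pow_le_pow_of_le_one hr0.le hr1.le (by omega)
        have e1 : r^(m+1) = r^m * r := pow_succ r m
        have e2 : r^(m+2) = r^m * r * r := by rw [pow_succ, pow_succ]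
        have hrm : (0:ℝ) ≤ r^m := pow_nonneg hr0.le m
        have hstep : a * (C * r^(m+1)) + b * (C * r^m) + c * r^m ≤ C * r^(m+2) := by
          rw [e1, e2]
          nlinarith [mul_nonneg (sub_nonneg.2 hcC) hrm]
        have hcd : c * d^(m+2) ≤ c * r^m := mul_le_mul_of_nonneg_left hdn hc
        calc |G (m+2)| ≤ a * |G (m+1)| + b * |G m| + c * d^(m+2) := habs
          _ ≤ a * (C * r^(m+1)) + b * (C * r^m) + c * r^m := by nlinarith
          _ ≤ C * r^(m+2) := hstep
  -- summability of the even / odd alternating series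
  have hgeo_sum : Summable (fun k : ℕ => (r^2)^k) :=
    summable_geometric_of_lt_one (by positivity) hr2lt
  have hfs : Summable (fun k : ℕ => (-1:ℝ)^k * G (2*k)) := by
    apply Summable.of_norm_bounded (hgeo_sum.mul_left C)
    intro k
    rw [Real.norm_eq_abs, abs_mul, abs_pow, abs_neg, abs_one, one_pow, one_mul,
      ← pow_mul]
    exact hbound (2*k)
  have hgs : Summable (fun k : ℕ => (-1:ℝ)^k * G (2*k+1)) := by
    apply Summable.of_norm_bounded (hgeo_sum.mul_left (C*r))
    intro k
    rw [Real.norm_eq_abs, abs_mul, abs_pow, abs_neg, abs_one, one_pow, one_mul]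
    calc |G (2*k+1)| ≤ C * r^(2*k+1) := hbound (2*k+1)
      _ = C * r * (r^2)^k := by rw [pow_succ', ← pow_mul]; ring
  -- values of G at small indices
  have hG2 : G 2 = a * G 1 + b * G 0 + c * d^2 := by
    have h := hG 2 (by omega)
    rw [show 2-1 = 1 by omega, show 2-2 = 0 by omega] at h
    exact h
  have hG3 : G 3 = a * G 2 + b * G 1 + c * d^3 := by
    have h := hG 3 (by omega)
    rw [show 3-1 = 2 by omega, show 3-2 = 1 by omega] at h
    exact h
  -- second-order recurrences for even/odd subsequences
  have hd2 : (0:ℝ) < 1 + d^2 := by positivity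
  have hd2' : (1:ℝ) + d^2 ≠ 0 := ne_of_gt hd2
  have hd2'' : d^2 + (1:ℝ) ≠ 0 := by positivity
  have hDpos : (0:ℝ) < a^2 + (b+1)^2 := by positivity
  have hD0 : a^2 + (b+1)^2 ≠ 0 := ne_of_gt hDpos
  have hreceven : ∀ k : ℕ,
      (-1:ℝ)^(k+2) * G (2*(k+2)) + (a^2+2*b) * ((-1:ℝ)^(k+1) * G (2*(k+1)))
        + b^2 * ((-1:ℝ)^k * G (2*k))
      = c*(d^2+a*d-b)*d^2 * (-(d^2))^k := by
    intro k
    have h4 : G (2*k+4) = a * G (2*k+3) + b * G (2*k+2) + c * d^(2*k+4) := by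
      have h := hG (2*k+4) (by omega)
      rw [show 2*k+4-1 = 2*k+3 by omega, show 2*k+4-2 = 2*k+2 by omega] at h
      exact h
    have h3 : G (2*k+3) = a * G (2*k+2) + b * G (2*k+1) + c * d^(2*k+3) := by
      have h := hG (2*k+3) (by omega)
      rw [show 2*k+3-1 = 2*k+2 by omega, show 2*k+3-2 = 2*k+1 by omega] at h
      exact h
    have h2 : G (2*k+2) = a * G (2*k+1) + b * G (2*k) + c * d^(2*k+2) := by
      have h := hG (2*k+2) (by omega)
      rw [show 2*k+2-1 = 2*k+1 by omega, show 2*k+2-2 = 2*k by omega] at h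
      exact h
    rw [show 2*(k+2) = 2*k+4 by ring, show 2*(k+1) = 2*k+2 by ring, h4, h3, h2,
      show ((-(d^2):ℝ))^k = (-1)^k * d^(2*k) by rw [neg_pow, pow_mul]]
    ring
  have hrecodd : ∀ k : ℕ,
      (-1:ℝ)^(k+2) * G (2*(k+2)+1) + (a^2+2*b) * ((-1:ℝ)^(k+1) * G (2*(k+1)+1))
        + b^2 * ((-1:ℝ)^k * G (2*k+1))
      = c*(d^2+a*d-b)*d^3 * (-(d^2))^k := by
    intro k
    have h5 : G (2*k+5) = a * G (2*k+4) + b * G (2*k+3) + c * d^(2*k+5) := by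
      have h := hG (2*k+5) (by omega)
      rw [show 2*k+5-1 = 2*k+4 by omega, show 2*k+5-2 = 2*k+3 by omega] at h
      exact h
    have h4 : G (2*k+4) = a * G (2*k+3) + b * G (2*k+2) + c * d^(2*k+4) := by
      have h := hG (2*k+4) (by omega)
      rw [show 2*k+4-1 = 2*k+3 by omega, show 2*k+4-2 = 2*k+2 by omega] at h
      exact h
    have h3 : G (2*k+3) = a * G (2*k+2) + b * G (2*k+1) + c * d^(2*k+3) := by
      have h := hG (2*k+3) (by omega)
      rw [show 2*k+3-1 = 2*k+2 by omega, show 2*k+3-2 = 2*k+1 by omega] at h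
      exact h
    rw [show 2*(k+2)+1 = 2*k+5 by ring, show 2*(k+1)+1 = 2*k+3 by ring, h5, h4, h3,
      show ((-(d^2):ℝ))^k = (-1)^k * d^(2*k) by rw [neg_pow, pow_mul]]
    ring
  -- geometric series value
  have hgeoval : (∑' k : ℕ, (-(d^2))^k) = 1/(1+d^2) := by
    rw [tsum_geometric_of_norm_lt_one (by
      rw [Real.norm_eq_abs, abs_neg, abs_of_nonneg (by positivity)]
      nlinarith)]
    rw [sub_neg_eq_add, one_div]
  have hgeos : Summable (fun k : ℕ => (-(d^2))^k) := by
    apply summable_geometric_of_norm_lt_one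
    rw [Real.norm_eq_abs, abs_neg, abs_of_nonneg (by positivity)]
    nlinarith
  -- even series closed form
  have hfs1 : Summable (fun k : ℕ => (-1:ℝ)^(k+1) * G (2*(k+1))) :=
    (summable_nat_add_iff 1).2 hfs
  have hfs2 : Summable (fun k : ℕ => (-1:ℝ)^(k+2) * G (2*(k+2))) :=
    (summable_nat_add_iff 2).2 hfs
  have hE0 : (∑' k : ℕ, (-1:ℝ)^k * G (2*k))
      = G 0 + ∑' k : ℕ, (-1:ℝ)^(k+1) * G (2*(k+1)) := by
    rw [Summable.tsum_eq_zero_add hfs]; norm_num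
  have hE1 : (∑' k : ℕ, (-1:ℝ)^(k+1) * G (2*(k+1)))
      = -G 2 + ∑' k : ℕ, (-1:ℝ)^(k+2) * G (2*(k+2)) := by
    rw [Summable.tsum_eq_zero_add hfs1]
    norm_num [show ∀ k : ℕ, k+1+1 = k+2 from fun _ => rfl]
  have hsplit : (∑' k : ℕ, ((-1:ℝ)^(k+2) * G (2*(k+2))
        + (a^2+2*b) * ((-1:ℝ)^(k+1) * G (2*(k+1))) + b^2 * ((-1:ℝ)^k * G (2*k))))
      = (∑' k : ℕ, (-1:ℝ)^(k+2) * G (2*(k+2)))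
        + (a^2+2*b) * (∑' k : ℕ, (-1:ℝ)^(k+1) * G (2*(k+1)))
        + b^2 * (∑' k : ℕ, (-1:ℝ)^k * G (2*k)) := by
    rw [Summable.tsum_add (hfs2.add (hfs1.mul_left _)) (hfs.mul_left _),
      Summable.tsum_add hfs2 (hfs1.mul_left _), tsum_mul_left, tsum_mul_left]
  have hrhs : (∑' k : ℕ, ((-1:ℝ)^(k+2) * G (2*(k+2))
        + (a^2+2*b) * ((-1:ℝ)^(k+1) * G (2*(k+1))) + b^2 * ((-1:ℝ)^k * G (2*k))))
      = c*(d^2+a*d-b)*d^2 * (1/(1+d^2)) := by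
    rw [tsum_congr hreceven, tsum_mul_left, hgeoval]
  have hcomb := hsplit.symm.trans hrhs
  have hkeyE : ((∑' k : ℕ, (-1:ℝ)^k * G (2*k)) - G 0 + G 2)
      + (a^2+2*b) * ((∑' k : ℕ, (-1:ℝ)^k * G (2*k)) - G 0)
      + b^2 * (∑' k : ℕ, (-1:ℝ)^k * G (2*k))
      = c*(d^2+a*d-b)*d^2 * (1/(1+d^2)) := by
    linear_combination (1+a^2+2*b)*hE0 + hE1 + hcomb
  have hSval : (∑' k : ℕ, (-1:ℝ)^k * G (2*k))
      = ((a^2+2*b+1) * G 0 - G 2 + c*(d^2+a*d-b)*d^2 * (1/(1+d^2))) / (a^2+(b+1)^2) := by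
    rw [eq_div_iff hD0]
    linear_combination hkeyE
  -- odd series closed form
  have hgs1 : Summable (fun k : ℕ => (-1:ℝ)^(k+1) * G (2*(k+1)+1)) :=
    (summable_nat_add_iff 1).2 hgs
  have hgs2 : Summable (fun k : ℕ => (-1:ℝ)^(k+2) * G (2*(k+2)+1)) :=
    (summable_nat_add_iff 2).2 hgs
  have hO0 : (∑' k : ℕ, (-1:ℝ)^k * G (2*k+1))
      = G 1 + ∑' k : ℕ, (-1:ℝ)^(k+1) * G (2*(k+1)+1) := by
    rw [Summable.tsum_eq_zero_add hgs]; norm_num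
  have hO1 : (∑' k : ℕ, (-1:ℝ)^(k+1) * G (2*(k+1)+1))
      = -G 3 + ∑' k : ℕ, (-1:ℝ)^(k+2) * G (2*(k+2)+1) := by
    rw [Summable.tsum_eq_zero_add hgs1]
    norm_num [show ∀ k : ℕ, k+1+1 = k+2 from fun _ => rfl]
  have hsplitO : (∑' k : ℕ, ((-1:ℝ)^(k+2) * G (2*(k+2)+1)
        + (a^2+2*b) * ((-1:ℝ)^(k+1) * G (2*(k+1)+1)) + b^2 * ((-1:ℝ)^k * G (2*k+1))))
      = (∑' k : ℕ, (-1:ℝ)^(k+2) * G (2*(k+2)+1))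
        + (a^2+2*b) * (∑' k : ℕ, (-1:ℝ)^(k+1) * G (2*(k+1)+1))
        + b^2 * (∑' k : ℕ, (-1:ℝ)^k * G (2*k+1)) := by
    rw [Summable.tsum_add (hgs2.add (hgs1.mul_left _)) (hgs.mul_left _),
      Summable.tsum_add hgs2 (hgs1.mul_left _), tsum_mul_left, tsum_mul_left]
  have hrhsO : (∑' k : ℕ, ((-1:ℝ)^(k+2) * G (2*(k+2)+1)
        + (a^2+2*b) * ((-1:ℝ)^(k+1) * G (2*(k+1)+1)) + b^2 * ((-1:ℝ)^k * G (2*k+1))))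
      = c*(d^2+a*d-b)*d^3 * (1/(1+d^2)) := by
    rw [tsum_congr hrecodd, tsum_mul_left, hgeoval]
  have hcombO := hsplitO.symm.trans hrhsO
  have hkeyO : ((∑' k : ℕ, (-1:ℝ)^k * G (2*k+1)) - G 1 + G 3)
      + (a^2+2*b) * ((∑' k : ℕ, (-1:ℝ)^k * G (2*k+1)) - G 1)
      + b^2 * (∑' k : ℕ, (-1:ℝ)^k * G (2*k+1))
      = c*(d^2+a*d-b)*d^3 * (1/(1+d^2)) := by
    linear_combination (1+a^2+2*b)*hO0 + hO1 + hcombO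
  have hTval : (∑' k : ℕ, (-1:ℝ)^k * G (2*k+1))
      = ((a^2+2*b+1) * G 1 - G 3 + c*(d^2+a*d-b)*d^3 * (1/(1+d^2))) / (a^2+(b+1)^2) := by
    rw [eq_div_iff hD0]
    linear_combination hkeyO
  -- identify the claimed limits with the sums
  have hXeqS : (G 0 + b^2 * Gm2 - c * (d^2 + a*d - b) / (d^2 + 1)) / (a^2 + (b+1)^2)
      = ∑' k : ℕ, (-1:ℝ)^k * G (2*k) := by
    rw [hSval, hGm2, hG2]
    field_simp
    ring
  have hYeqT : (G 1 + b^2 * Gm1 - c * d * (d^2 + a*d - b) / (d^2 + 1)) / (a^2 + (b+1)^2)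
      = ∑' k : ℕ, (-1:ℝ)^k * G (2*k+1) := by
    rw [hTval, hGm1, hG3, hG2]
    field_simp
    ring
  -- partial sums
  have hXpart : ∀ n : ℕ, 2 ≤ n →
      X n = ∑ k ∈ Finset.range (n/2 + 1), (-1:ℝ)^k * G (2*k) := by
    intro n hn
    rcases Nat.even_or_odd n with he | ho
    · rw [hXeven n hn he, hΓeven n he]
    · obtain ⟨m, hm⟩ := ho
      rw [hXodd n (by omega) ⟨m, hm⟩, hΓeven (n-1) (by subst hm; exact ⟨m, by omega⟩),
        show (n-1)/2 = n/2 by omega]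
  have hYpart : ∀ n : ℕ, 2 ≤ n →
      Y n = ∑ k ∈ Finset.range ((n+1)/2), (-1:ℝ)^k * G (2*k+1) := by
    intro n hn
    rcases Nat.even_or_odd n with he | ho
    · obtain ⟨m, hm⟩ := id he
      rw [hYeven n hn he, hΓodd (n-1) (by subst hm; exact ⟨m-1, by omega⟩),
        show (n-1-1)/2 + 1 = (n+1)/2 by omega]
    · obtain ⟨m, hm⟩ := ho
      rw [hYodd n (by omega) ⟨m, hm⟩, hΓodd n ⟨m, hm⟩,
        show (n-1)/2 + 1 = (n+1)/2 by omega]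
  -- convergence
  have hm2 : Filter.Tendsto (fun n : ℕ => n/2 + 1) Filter.atTop Filter.atTop := by
    apply Filter.tendsto_atTop_atTop.2
    intro N
    exact ⟨2*N, fun n hn => by omega⟩
  have hm2' : Filter.Tendsto (fun n : ℕ => (n+1)/2) Filter.atTop Filter.atTop := by
    apply Filter.tendsto_atTop_atTop.2
    intro N
    exact ⟨2*N, fun n hn => by omega⟩
  have hXlim : Filter.Tendsto X Filter.atTop (nhds (∑' k : ℕ, (-1:ℝ)^k * G (2*k))) := by
    apply Filter.Tendsto.congr' _ ((hfs.hasSum.tendsto_sum_nat).comp hm2)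
    filter_upwards [Filter.eventually_ge_atTop 2] with n hn
    simp only [Function.comp]
    exact (hXpart n hn).symm
  have hYlim : Filter.Tendsto Y Filter.atTop (nhds (∑' k : ℕ, (-1:ℝ)^k * G (2*k+1))) := by
    apply Filter.Tendsto.congr' _ ((hgs.hasSum.tendsto_sum_nat).comp hm2')
    filter_upwards [Filter.eventually_ge_atTop 2] with n hn
    simp only [Function.comp]
    exact (hYpart n hn).symm
  constructor
  · rw [hXeqS]; exact hXlim
  · rw [hYeqT]; exact hYlim
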